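/- Let K = {R_n ⊕ I : n ≥ 2} ∪ {R ⊕ I}, where R_n ⊕ I is the graph consisting of a path on n vertices together with infinitely many isolated vertices and R ⊕ I is the one-way infinite ray together with infinitely many isolated vertices. Then K is E_range-learnable but not Ex-learnable: some continuous-on-LD(K) map reduces isomorphism on LD(K) to E_range, but no learner Ex-learns K. -/

import Mathlib

/-- A structure on domain ℕ: a binary relation given as a map to `Bool`. -/
abbrev Struc := ℕ → ℕ → Bool

/-- The restrictions of `R` and `R'` to `{0,…,s} × {0,…,s}` agree. -/
def restrEq (R R' : Struc) (s : ℕ) : Prop :=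
  ∀ x ≤ s, ∀ y ≤ s, R x y = R' x y

/-- `R` and `R'` are isomorphic structures. -/
def Isom (R R' : Struc) : Prop :=
  ∃ e : ℕ ≃ ℕ, ∀ x y, R' (e x) (e y) = R x y

/-- `R↾s` embeds into `R'`: there is a map injective on `{0,…,s}` preserving the relation. -/
def EmbedsRestr (R : Struc) (s : ℕ) (R' : Struc) : Prop :=
  ∃ h : ℕ → ℕ, (∀ x ≤ s, ∀ y ≤ s, h x = h y → x = y) ∧
    (∀ x ≤ s, ∀ y ≤ s, R' (h x) (h y) = R x y)

/-- The learning domain of a family: all isomorphic copies of members of the family. -/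
def LD {I : Type} (A : I → Struc) : Set Struc := {R | ∃ i, Isom R (A i)}

/-- A learner: its conjecture at stage `s` depends only on `R↾s`. -/
def IsLearner {I : Type} (M : Struc → ℕ → Option I) : Prop :=
  ∀ R R' s, restrEq R R' s → M R s = M R' s

/-- `M` Ex-learns the family `A`. -/
def ExLearns {I : Type} (A : I → Struc) (M : Struc → ℕ → Option I) : Prop :=
  ∀ R i, Isom R (A i) → ∃ s₀, ∀ s ≥ s₀, M R s = some i

/-- `M` Fin-learns the family `A`. -/
def FinLearns {I : Type} (A : I → Struc) (M : Struc → ℕ → Option I) : Prop :=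
  ∀ R i, Isom R (A i) →
    ∃ s₀, (∀ s < s₀, M R s = none) ∧ (∀ s ≥ s₀, M R s = some i)

/-- `M` co-learns the family `A`. -/
def CoLearns {I : Type} (A : I → Struc) (M : Struc → ℕ → Option I) : Prop :=
  ∀ R i, Isom R (A i) → ∀ j, (∃ s, M R s = some j) ↔ j ≠ i

/-- `M` nUs-learns the family `A`: it Ex-learns it and never abandons the correct conjecture. -/
def NUsLearns {I : Type} (A : I → Struc) (M : Struc → ℕ → Option I) : Prop :=
  ExLearns A M ∧
    ∀ R i, Isom R (A i) → ∀ s, M R s = some i → ∀ t ≥ s, M R t = some i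

/-- `M` Dec-learns the family `A`: it Ex-learns it and never repeats an abandoned conjecture. -/
def DecLearns {I : Type} (A : I → Struc) (M : Struc → ℕ → Option I) : Prop :=
  ExLearns A M ∧
    ∀ R ∈ LD A, ∀ (j : I) (s : ℕ), M R s = some j → M R (s + 1) ≠ some j →
      ∀ t > s, M R t ≠ some j

/-- `M` PL-learns the family `A`: the unique conjecture output infinitely often is correct. -/
def PLLearns {I : Type} (A : I → Struc) (M : Struc → ℕ → Option I) : Prop :=
  ∀ R ∈ LD A, ∀ i, {s | M R s = some i}.Infinite ↔ Isom R (A i)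

/-- The relation `E₀` on Baire space: eventual agreement. -/
def E0 (p q : ℕ → ℕ) : Prop := ∃ m, ∀ n ≥ m, p n = q n

/-- The relation `E₃` on `ℕ → (ℕ → ℕ)`: columnwise `E₀`. -/
def E3 (p q : ℕ → ℕ → ℕ) : Prop := ∀ m, E0 (p m) (q m)

/-- The relation `E_range` on Baire space: equality of ranges. -/
def Erange (p q : ℕ → ℕ) : Prop := Set.range p = Set.range q

/-- The one-way infinite ray (on the even numbers) together with infinitely many
isolated vertices (the odd numbers): `R ⊕ I`. -/
def rayGraph : Struc := fun x y =>
  decide (x % 2 = 0 ∧ y % 2 = 0 ∧ (x + 2 = y ∨ y + 2 = x))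

/-- The path on vertices `{0,…,n−1}` together with infinitely many isolated vertices:
`R_n ⊕ I`. -/
def pathGraph (n : ℕ) : Struc := fun x y =>
  decide ((x + 1 = y ∨ y + 1 = x) ∧ x < n ∧ y < n)

/-- The family `{R_n ⊕ I : n ≥ 2} ∪ {R ⊕ I}`: index `0` is the ray, index `k+1` is the
path on `k+2` vertices. -/
def pathFamily : ℕ → Struc
  | 0 => rayGraph
  | k + 1 => pathGraph (k + 2)

open Finset in
def eCnt (R : Struc) (s : ℕ) : ℕ :=
  ((range (s+1) ×ˢ range (s+1)).filter (fun p => p.1 < p.2 ∧ R p.1 p.2 = true)).card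

def Gam (R : Struc) : ℕ → ℕ
  | 0 => 0
  | s+1 => if Gam R s < eCnt R (s+1) then Gam R s + 1 else Gam R s

lemma eCnt_mono (R : Struc) {s t : ℕ} (h : s ≤ t) : eCnt R s ≤ eCnt R t := by
  apply Finset.card_le_card
  intro p hp
  simp only [Finset.mem_filter, Finset.mem_product, Finset.mem_range] at hp ⊢
  exact ⟨⟨by omega, by omega⟩, hp.2⟩

lemma Gam_le (R : Struc) (s : ℕ) : Gam R s ≤ eCnt R s := by
  induction s with
  | zero => simp [Gam]
  | succ s ih =>
    rw [Gam]
    split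
    · omega
    · exact le_trans ih (eCnt_mono R (by omega))

lemma Gam_mono (R : Struc) : Monotone (Gam R) := by
  apply monotone_nat_of_le_succ
  intro s
  rw [Gam]; split <;> omega

lemma Gam_reach (R : Struc) (m s : ℕ) (h : m ≤ eCnt R s) : m ≤ Gam R (s + m) := by
  induction m with
  | zero => omega
  | succ m ih =>
    have h1 : m ≤ Gam R (s + m) := ih (by omega)
    rcases Nat.lt_or_ge (Gam R (s+m)) (m+1) with hlt | hge
    · have hcond : Gam R (s+m) < eCnt R (s+m+1) :=
        lt_of_lt_of_le hlt (le_trans h (eCnt_mono R (by omega)))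
      rw [show s + (m+1) = (s+m)+1 by omega, Gam, if_pos hcond]
      omega
    · calc m+1 ≤ Gam R (s+m) := hge
        _ ≤ Gam R (s + (m+1)) := Gam_mono R (by omega)

lemma Gam_surj (R : Struc) (m t : ℕ) (h : m ≤ Gam R t) : ∃ u, Gam R u = m := by
  induction t with
  | zero => exact ⟨0, by simp [Gam] at h ⊢; omega⟩
  | succ t ih =>
    rcases Nat.lt_or_ge (Gam R t) m with hlt | hge
    · refine ⟨t+1, ?_⟩
      rw [Gam] at h ⊢
      split at h <;> split <;> omega
    · exact ih hge

lemma range_Gam (R : Struc) : Set.range (Gam R) = {m | ∃ s, m ≤ eCnt R s} := by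
  ext m
  constructor
  · rintro ⟨s, rfl⟩
    exact ⟨s, Gam_le R s⟩
  · rintro ⟨s, hs⟩
    exact Gam_surj R m (s+m) (Gam_reach R m s hs)

lemma eCnt_transfer {R R' : Struc} (hsym : ∀ x y, R x y = R y x)
    (hiso : Isom R R') (m : ℕ) (h : ∃ s, m ≤ eCnt R s) : ∃ s, m ≤ eCnt R' s := by
  obtain ⟨e, he⟩ := hiso
  obtain ⟨s, hs⟩ := h
  classical
  set S := ((Finset.range (s+1) ×ˢ Finset.range (s+1)).filter
    (fun p => p.1 < p.2 ∧ R p.1 p.2 = true)) with hS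
  set s' := (Finset.range (s+1)).sup (fun x => e x) with hs'
  refine ⟨s', ?_⟩
  set F : ℕ × ℕ → ℕ × ℕ := fun p => (min (e p.1) (e p.2), max (e p.1) (e p.2)) with hF
  have einj : Function.Injective e := e.injective
  have hinj : Set.InjOn F S := by
    intro p hp q hq hFeq
    simp only [hS, Finset.coe_filter, Finset.mem_product, Finset.mem_range, Set.mem_setOf_eq,
      Finset.mem_coe] at hp hq
    have h1 : min (e p.1) (e p.2) = min (e q.1) (e q.2) := congrArg Prod.fst hFeq
    have h2 : max (e p.1) (e p.2) = max (e q.1) (e q.2) := congrArg Prod.snd hFeq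
    have hcase : (e p.1 = e q.1 ∧ e p.2 = e q.2) ∨ (e p.1 = e q.2 ∧ e p.2 = e q.1) := by omega
    rcases hcase with ⟨ha, hb⟩ | ⟨ha, hb⟩
    · exact Prod.ext (einj ha) (einj hb)
    · exfalso
      have h3 := einj ha; have h4 := einj hb
      omega
  have hsub : S.image F ⊆ ((Finset.range (s'+1) ×ˢ Finset.range (s'+1)).filter
      (fun p => p.1 < p.2 ∧ R' p.1 p.2 = true)) := by
    intro q hq
    simp only [Finset.mem_image] at hq
    obtain ⟨p, hp, rfl⟩ := hq
    simp only [hS, Finset.mem_filter, Finset.mem_product, Finset.mem_range] at hp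
    obtain ⟨⟨hp1, hp2⟩, hlt, hR⟩ := hp
    have hb1 : e p.1 ≤ s' := Finset.le_sup (Finset.mem_range.2 hp1)
    have hb2 : e p.2 ≤ s' := Finset.le_sup (Finset.mem_range.2 hp2)
    have hne : e p.1 ≠ e p.2 := fun hcon => by have := einj hcon; omega
    have hR1 : R' (e p.1) (e p.2) = true := by rw [he]; exact hR
    have hR2 : R' (e p.2) (e p.1) = true := by rw [he, hsym]; exact hR
    simp only [Finset.mem_filter, Finset.mem_product, Finset.mem_range, hF]
    refine ⟨⟨by omega, by omega⟩, by omega, ?_⟩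
    rcases le_or_gt (e p.1) (e p.2) with hle | hlt2
    · rw [min_eq_left hle, max_eq_right hle]; exact hR1
    · rw [min_eq_right hlt2.le, max_eq_left hlt2.le]; exact hR2
  calc m ≤ S.card := hs
    _ = (S.image F).card := (Finset.card_image_of_injOn hinj).symm
    _ ≤ _ := Finset.card_le_card hsub

lemma isom_symm {R R' : Struc} (h : Isom R R') : Isom R' R := by
  obtain ⟨e, he⟩ := h
  refine ⟨e.symm, fun x y => ?_⟩
  have := he (e.symm x) (e.symm y)
  simpa using this.symm

lemma isom_trans {R S T : Struc} (h1 : Isom R S) (h2 : Isom S T) : Isom R T := by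
  obtain ⟨e1, he1⟩ := h1
  obtain ⟨e2, he2⟩ := h2
  exact ⟨e1.trans e2, fun x y => by simp [Equiv.trans_apply, he2, he1]⟩

lemma pathFamily_symm (i : ℕ) : ∀ x y, pathFamily i x y = pathFamily i y x := by
  intro x y
  cases i with
  | zero => simp only [pathFamily, rayGraph]; exact decide_eq_decide.2 (by tauto)
  | succ k => simp only [pathFamily, pathGraph]; exact decide_eq_decide.2 (by tauto)

lemma symm_of_isom {R R' : Struc} (h : Isom R R') (hs : ∀ x y, R' x y = R' y x) :
    ∀ x y, R x y = R y x := by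
  intro x y
  obtain ⟨e, he⟩ := h
  rw [← he, ← he, hs]

def Qs (R : Struc) : Set ℕ := {m | ∃ s, m ≤ eCnt R s}

lemma Qs_eq_of_isom {R R' : Struc} (h : Isom R R') (hs : ∀ x y, R' x y = R' y x) :
    Qs R = Qs R' := by
  have hRs : ∀ x y, R x y = R y x := symm_of_isom h hs
  ext m
  exact ⟨fun hm => eCnt_transfer hRs h m hm, fun hm => eCnt_transfer hs (isom_symm h) m hm⟩

lemma Qs_pathGraph (k : ℕ) : Qs (pathGraph (k+2)) = Set.Iic (k+1) := by
  classical
  ext m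
  simp only [Qs, Set.mem_setOf_eq, Set.mem_Iic]
  constructor
  · rintro ⟨s, hs⟩
    refine le_trans hs ?_
    have : ((Finset.range (s+1) ×ˢ Finset.range (s+1)).filter
        (fun p => p.1 < p.2 ∧ pathGraph (k+2) p.1 p.2 = true)).card ≤ (Finset.range (k+1)).card := by
      apply Finset.card_le_card_of_injOn (fun p => p.1)
      · intro p hp
        simp only [Finset.mem_coe, Finset.mem_filter, Finset.mem_product, Finset.mem_range] at hp
        obtain ⟨-, hlt, hR⟩ := hp
        simp only [pathGraph, decide_eq_true_eq] at hR
        simp only [Finset.mem_coe, Finset.mem_range]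
        omega
      · intro p hp q hq hpq
        simp only [Finset.coe_filter, Set.mem_setOf_eq, Finset.mem_product,
          Finset.mem_range] at hp hq
        obtain ⟨-, hlt, hR⟩ := hp
        obtain ⟨-, hlt', hR'⟩ := hq
        simp only [pathGraph, decide_eq_true_eq] at hR hR'
        have hpq2 : p.1 = q.1 := hpq
        have : p.2 = q.2 := by omega
        exact Prod.ext hpq this
    simpa [eCnt] using this
  · intro hm
    refine ⟨k+2, le_trans hm ?_⟩
    have hsub : (Finset.range (k+1)).image (fun i => (i, i+1)) ⊆
        ((Finset.range (k+3) ×ˢ Finset.range (k+3)).filter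
          (fun p => p.1 < p.2 ∧ pathGraph (k+2) p.1 p.2 = true)) := by
      intro q hq
      simp only [Finset.mem_image, Finset.mem_range] at hq
      obtain ⟨i, hi, rfl⟩ := hq
      refine Finset.mem_filter.2 ⟨Finset.mem_product.2 ⟨Finset.mem_range.2 (by omega),
        Finset.mem_range.2 (by omega)⟩, ?_⟩
      exact ⟨by omega, by simp [pathGraph]; omega⟩
    have hcard : k+1 ≤ ((Finset.range (k+1)).image (fun i => (i, i+1))).card := by
      rw [Finset.card_image_of_injective _ (fun a b hab => by
        simpa using congrArg Prod.fst hab)]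
      simp
    exact le_trans hcard (Finset.card_le_card hsub)

lemma Qs_rayGraph : Qs rayGraph = Set.univ := by
  classical
  ext m
  simp only [Qs, Set.mem_setOf_eq, Set.mem_univ, iff_true]
  refine ⟨2*m, ?_⟩
  have hsub : (Finset.range m).image (fun i => (2*i, 2*i+2)) ⊆
      ((Finset.range (2*m+1) ×ˢ Finset.range (2*m+1)).filter
        (fun p => p.1 < p.2 ∧ rayGraph p.1 p.2 = true)) := by
    intro q hq
    simp only [Finset.mem_image, Finset.mem_range] at hq
    obtain ⟨i, hi, rfl⟩ := hq
    refine Finset.mem_filter.2 ⟨Finset.mem_product.2 ⟨Finset.mem_range.2 (by omega),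
      Finset.mem_range.2 (by omega)⟩, ?_⟩
    exact ⟨by omega, by simp [rayGraph]⟩
  have hcard : m ≤ ((Finset.range m).image (fun i => (2*i, 2*i+2))).card := by
    rw [Finset.card_image_of_injective _ (fun a b hab => by
      simpa using congrArg Prod.fst hab)]
    simp
  exact le_trans hcard (Finset.card_le_card hsub)

lemma Qs_pathFamily_inj {i j : ℕ} (h : Qs (pathFamily i) = Qs (pathFamily j)) : i = j := by
  cases i with
  | zero => cases j with
    | zero => rfl
    | succ k =>
      exfalso
      rw [show pathFamily 0 = rayGraph from rfl, Qs_rayGraph,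
        show pathFamily (k+1) = pathGraph (k+2) from rfl, Qs_pathGraph] at h
      have : (k+2 : ℕ) ∈ (Set.univ : Set ℕ) := Set.mem_univ _
      rw [h] at this
      simp at this
  | succ k => cases j with
    | zero =>
      exfalso
      rw [show pathFamily 0 = rayGraph from rfl, Qs_rayGraph,
        show pathFamily (k+1) = pathGraph (k+2) from rfl, Qs_pathGraph] at h
      have : (k+2 : ℕ) ∈ (Set.univ : Set ℕ) := Set.mem_univ _
      rw [← h] at this
      simp at this
    | succ l =>
      rw [show pathFamily (k+1) = pathGraph (k+2) from rfl,
        show pathFamily (l+1) = pathGraph (l+2) from rfl, Qs_pathGraph, Qs_pathGraph] at h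
      have h1 : (k+1 : ℕ) ∈ Set.Iic (l+1) := by rw [← h]; simp
      have h2 : (l+1 : ℕ) ∈ Set.Iic (k+1) := by rw [h]; simp
      simp only [Set.mem_Iic] at h1 h2
      omega

lemma eCnt_restr {R R' : Struc} {s : ℕ} (h : restrEq R R' s) : eCnt R s = eCnt R' s := by
  unfold eCnt
  apply Finset.card_bij (fun p _ => p)
  · intro p hp
    simp only [Finset.mem_filter, Finset.mem_product, Finset.mem_range] at hp ⊢
    rw [← h p.1 (by omega) p.2 (by omega)]
    exact hp
  · intro p _ q _ hpq; exact hpq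
  · intro p hp
    refine ⟨p, ?_, rfl⟩
    simp only [Finset.mem_filter, Finset.mem_product, Finset.mem_range] at hp ⊢
    rw [h p.1 (by omega) p.2 (by omega)]
    exact hp

lemma restrEq_mono {R R' : Struc} {s t : ℕ} (h : restrEq R R' s) (ht : t ≤ s) :
    restrEq R R' t := fun x hx y hy => h x (by omega) y (by omega)

lemma Gam_restr {R R' : Struc} {s : ℕ} (h : restrEq R R' s) : ∀ t ≤ s, Gam R t = Gam R' t := by
  intro t ht
  induction t with
  | zero => rfl
  | succ t ih =>
    rw [Gam, Gam, ih (by omega), eCnt_restr (restrEq_mono h ht)]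

lemma Gam_continuous : Continuous (fun R : Struc => Gam R) := by
  apply continuous_pi
  intro s
  classical
  let ext : (Fin (s+1) → Fin (s+1) → Bool) → Struc := fun v x y =>
    if h : x < s+1 ∧ y < s+1 then v ⟨x, h.1⟩ ⟨y, h.2⟩ else false
  have key : (fun R : Struc => Gam R s) =
      (fun v => Gam (ext v) s) ∘ (fun (R : Struc) (i j : Fin (s+1)) => R i j) := by
    funext R
    apply Gam_restr _ s le_rfl
    intro x hx y hy
    simp only [Function.comp, ext]
    rw [dif_pos ⟨by omega, by omega⟩]
  rw [key]
  exact (continuous_of_discreteTopology).comp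
    (continuous_pi fun i => continuous_pi fun j =>
      (continuous_apply (j : ℕ)).comp (continuous_apply (i : ℕ)))

open Function Set

lemma exists_perm (v c : ℕ → ℕ) (I : Set ℕ) (hv : Function.Injective v) (hc : Function.Injective c)
    (hAc : (v '' I)ᶜ.Infinite) (hBc : (c '' I)ᶜ.Infinite) :
    ∃ e : ℕ ≃ ℕ, (∀ i ∈ I, e (v i) = c i) ∧ (∀ x, x ∉ v '' I → e x ∉ c '' I) := by
  classical
  let e0 : ↥(v '' I) ≃ ↥(c '' I) :=
    ((Equiv.Set.image v I hv).symm).trans (Equiv.Set.image c I hc)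
  have hIA : Infinite ↥((v '' I)ᶜ) := hAc.to_subtype
  have hIB : Infinite ↥((c '' I)ᶜ) := hBc.to_subtype
  obtain ⟨eC⟩ : Nonempty (↥((v '' I)ᶜ) ≃ ↥((c '' I)ᶜ)) := nonempty_equiv_of_countable
  refine ⟨(Equiv.Set.sumCompl (v '' I)).symm.trans ((e0.sumCongr eC).trans
    (Equiv.Set.sumCompl (c '' I))), ?_, ?_⟩
  · intro i hi
    have hm : v i ∈ v '' I := mem_image_of_mem v hi
    simp only [Equiv.trans_apply, Equiv.Set.sumCompl_symm_apply_of_mem hm, Equiv.sumCongr_apply,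
      Sum.map_inl, Equiv.Set.sumCompl_apply_inl]
    have h1 : (Equiv.Set.image v I hv).symm ⟨v i, hm⟩ = ⟨i, hi⟩ :=
      Equiv.Set.image_symm_apply v I hv i hm
    show ((Equiv.Set.image v I hv).symm.trans (Equiv.Set.image c I hc) ⟨v i, hm⟩ : ℕ) = c i
    rw [Equiv.trans_apply, h1, Equiv.Set.image_apply]
  · intro x hx
    simp only [Equiv.trans_apply, Equiv.Set.sumCompl_symm_apply_of_notMem hx,
      Equiv.sumCongr_apply, Sum.map_inr, Equiv.Set.sumCompl_apply_inr]
    exact (eC ⟨x, hx⟩).2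

/-- finite path along the vertex sequence `w`, using the first `n` vertices -/
def Pstr (w : ℕ → ℕ) (n : ℕ) : Struc := fun x y =>
  (List.range n).any (fun i => decide (i + 1 < n ∧
    ((x = w i ∧ y = w (i+1)) ∨ (y = w i ∧ x = w (i+1)))))

/-- infinite ray along the vertex sequence `w` -/
def RayStr (w : ℕ → ℕ) : Struc := fun x y =>
  (List.range (x + y + 1)).any (fun i => decide
    ((x = w i ∧ y = w (i+1)) ∨ (y = w i ∧ x = w (i+1))))

lemma Pstr_iff (w : ℕ → ℕ) (n x y : ℕ) : Pstr w n x y = true ↔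
    ∃ i, i + 1 < n ∧ ((x = w i ∧ y = w (i+1)) ∨ (y = w i ∧ x = w (i+1))) := by
  simp only [Pstr, List.any_eq_true, List.mem_range, decide_eq_true_eq]
  constructor
  · rintro ⟨i, -, hi⟩; exact ⟨i, hi⟩
  · rintro ⟨i, h1, h2⟩; exact ⟨i, by omega, h1, h2⟩

lemma Ray_iff (w : ℕ → ℕ) (hw : ∀ i, i ≤ w i) (x y : ℕ) : RayStr w x y = true ↔
    ∃ i, (x = w i ∧ y = w (i+1)) ∨ (y = w i ∧ x = w (i+1)) := by
  simp only [RayStr, List.any_eq_true, List.mem_range, decide_eq_true_eq]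
  constructor
  · rintro ⟨i, -, hi⟩; exact ⟨i, hi⟩
  · rintro ⟨i, h⟩
    refine ⟨i, ?_, h⟩
    have := hw i
    rcases h with ⟨h1, -⟩ | ⟨h1, -⟩ <;> omega

lemma Pstr_congr {w w' : ℕ → ℕ} {n : ℕ} (h : ∀ i < n, w i = w' i) :
    Pstr w n = Pstr w' n := by
  funext x y
  rw [Bool.eq_iff_iff, Pstr_iff, Pstr_iff]
  constructor
  · rintro ⟨i, hi, hd⟩
    exact ⟨i, hi, by rw [← h i (by omega), ← h (i+1) (by omega)]; exact hd⟩
  · rintro ⟨i, hi, hd⟩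
    exact ⟨i, hi, by rw [h i (by omega), h (i+1) (by omega)]; exact hd⟩

lemma isom_Pstr {w : ℕ → ℕ} (hw : StrictMono w) (n : ℕ) :
    Isom (Pstr w n) (pathGraph n) := by
  classical
  obtain ⟨e, he1, he2⟩ := exists_perm w id (Set.Iio n) hw.injective injective_id
    (((Set.finite_Iio n).image w).infinite_compl)
    (by rw [Set.image_id]; exact (Set.finite_Iio n).infinite_compl)
  refine ⟨e, fun x y => ?_⟩
  rw [Bool.eq_iff_iff]
  simp only [pathGraph, decide_eq_true_eq]
  rw [Pstr_iff]
  by_cases hx : x ∈ w '' Set.Iio n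
  · by_cases hy : y ∈ w '' Set.Iio n
    · obtain ⟨i, hi, rfl⟩ := hx
      obtain ⟨j, hj, rfl⟩ := hy
      rw [he1 i hi, he1 j hj]
      simp only [Set.mem_Iio] at hi hj
      simp only [id] at *
      constructor
      · rintro ⟨hij, -, -⟩
        rcases hij with hij | hij
        · exact ⟨i, by omega, Or.inl ⟨rfl, by rw [hij]⟩⟩
        · exact ⟨j, by omega, Or.inr ⟨rfl, by rw [hij]⟩⟩
      · rintro ⟨m, hm, hd⟩
        rcases hd with ⟨h1, h2⟩ | ⟨h1, h2⟩
        · have := hw.injective h1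
          have := hw.injective h2
          omega
        · have := hw.injective h1
          have := hw.injective h2
          omega
    · have hey : e y ∉ Set.Iio n := by simpa using he2 y hy
      simp only [Set.mem_Iio] at hey
      constructor
      · rintro ⟨-, -, h⟩; omega
      · rintro ⟨m, hm, hd⟩
        exfalso
        apply hy
        rcases hd with ⟨-, h2⟩ | ⟨h2, -⟩
        · exact ⟨m+1, by simp; omega, h2.symm⟩
        · exact ⟨m, by simp; omega, h2.symm⟩
  · have hex : e x ∉ Set.Iio n := by simpa using he2 x hx
    simp only [Set.mem_Iio] at hex
    constructor
    · rintro ⟨-, h, -⟩; omega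
    · rintro ⟨m, hm, hd⟩
      exfalso
      apply hx
      rcases hd with ⟨h2, -⟩ | ⟨-, h2⟩
      · exact ⟨m, by simp; omega, h2.symm⟩
      · exact ⟨m+1, by simp; omega, h2.symm⟩

lemma isom_RayStr {w : ℕ → ℕ} (hw : StrictMono w) (hgap : ∀ i, w i + 2 ≤ w (i+1)) :
    Isom (RayStr w) rayGraph := by
  classical
  have hwi : ∀ i, i ≤ w i := fun i => Nat.le_of_lt_succ (Nat.lt_succ_of_le (hw.le_apply))
  have hAc : (w '' Set.univ)ᶜ.Infinite := by
    rw [Set.image_univ]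
    apply infinite_of_injective_forall_mem (f := fun i => w i + 1)
    · intro a b hab
      have := hw.injective
      simp only at hab
      have : w a = w b := by omega
      exact hw.injective this
    · intro i
      simp only [Set.mem_compl_iff, Set.mem_range, not_exists]
      intro j hj
      rcases lt_trichotomy j (i+1) with h | h | h
      · have : w j ≤ w i := hw.monotone (by omega)
        omega
      · subst h
        have := hgap i
        omega
      · have : w (i+1) ≤ w j := hw.monotone (by omega)
        have := hgap i
        omega
  have hBc : ((fun i => 2*i) '' Set.univ)ᶜ.Infinite := by
    apply infinite_of_injective_forall_mem (f := fun i => 2*i + 1)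
    · intro a b hab; simp only at hab; omega
    · intro i
      simp only [Set.image_univ, Set.mem_compl_iff, Set.mem_range, not_exists]
      intro j; omega
  obtain ⟨e, he1, he2⟩ := exists_perm w (fun i => 2*i) Set.univ hw.injective
    (fun a b hab => by simp only at hab; omega) hAc hBc
  refine ⟨e, fun x y => ?_⟩
  rw [Bool.eq_iff_iff]
  simp only [rayGraph, decide_eq_true_eq]
  rw [Ray_iff w hwi]
  by_cases hx : x ∈ w '' Set.univ
  · by_cases hy : y ∈ w '' Set.univ
    · obtain ⟨i, -, rfl⟩ := hx
      obtain ⟨j, -, rfl⟩ := hy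
      rw [he1 i trivial, he1 j trivial]
      constructor
      · rintro ⟨-, -, hij | hij⟩
        · exact ⟨i, Or.inl ⟨rfl, congrArg w (by omega)⟩⟩
        · exact ⟨j, Or.inr ⟨rfl, congrArg w (by omega)⟩⟩
      · rintro ⟨m, ⟨h1, h2⟩ | ⟨h1, h2⟩⟩
        · have := hw.injective h1
          have := hw.injective h2
          subst this
          refine ⟨by omega, by omega, by omega⟩
        · have := hw.injective h1
          have := hw.injective h2
          subst this
          refine ⟨by omega, by omega, by omega⟩
    · have h2 : e y % 2 = 1 := by
        have h3 := he2 y hy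
        simp only [Set.image_univ, Set.mem_compl_iff, Set.mem_range, not_exists] at h3
        have := h3 (e y / 2); omega
      constructor
      · rintro ⟨-, h0, -⟩; omega
      · rintro ⟨m, ⟨-, h1⟩ | ⟨h1, -⟩⟩
        · exact absurd ⟨m+1, trivial, h1.symm⟩ hy
        · exact absurd ⟨m, trivial, h1.symm⟩ hy
  · have h2 : e x % 2 = 1 := by
      have h3 := he2 x hx
      simp only [Set.image_univ, Set.mem_compl_iff, Set.mem_range, not_exists] at h3
      have := h3 (e x / 2); omega
    constructor
    · rintro ⟨h0, -, -⟩; omega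
    · rintro ⟨m, ⟨h1, -⟩ | ⟨-, h1⟩⟩
      · exact absurd ⟨m, trivial, h1.symm⟩ hx
      · exact absurd ⟨m+1, trivial, h1.symm⟩ hx

noncomputable def pick (M : Struc → ℕ → Option ℕ) (R : Struc) (i b : ℕ) : ℕ :=
  Classical.epsilon (fun s => b ≤ s ∧ M R s = some i)

lemma pick_spec (M : Struc → ℕ → Option ℕ) {R : Struc} {i b : ℕ}
    (h : ∃ s, b ≤ s ∧ M R s = some i) :
    b ≤ pick M R i b ∧ M R (pick M R i b) = some i :=
  Classical.epsilon_spec h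

def PL (l : List ℕ) : Struc := Pstr (fun i => l.getD i 0) l.length

noncomputable def stg (M : Struc → ℕ → Option ℕ) : ℕ → List ℕ × ℕ
  | 0 => ([0, 2], pick M (PL [0, 2]) 1 0)
  | k+1 =>
    let p := stg M k
    let l := p.1 ++ [p.2 + p.1.getD (k+1) 0 + 2]
    (l, pick M (PL l) (k+2) (p.2+1))

noncomputable def vv (M : Struc → ℕ → Option ℕ) : ℕ → ℕ := fun i => (stg M i).1.getD i 0

lemma stg_succ_fst (M : Struc → ℕ → Option ℕ) (k : ℕ) :
    (stg M (k+1)).1 = (stg M k).1 ++ [(stg M k).2 + (stg M k).1.getD (k+1) 0 + 2] := rfl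

lemma stg_len (M : Struc → ℕ → Option ℕ) : ∀ k, (stg M k).1.length = k + 2
  | 0 => rfl
  | k+1 => by rw [stg_succ_fst, List.length_append, stg_len M k]; rfl

lemma stg_step (M : Struc → ℕ → Option ℕ) (k i : ℕ) (h : i < k + 2) :
    (stg M (k+1)).1.getD i 0 = (stg M k).1.getD i 0 := by
  rw [stg_succ_fst, List.getD_append _ _ _ _ (by rw [stg_len]; omega)]

lemma stg_stab (M : Struc → ℕ → Option ℕ) : ∀ d k i, i < k + 2 →
    (stg M (k+d)).1.getD i 0 = (stg M k).1.getD i 0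
  | 0, k, i, _ => rfl
  | d+1, k, i, h => by
    rw [show k + (d+1) = (k+d) + 1 by omega, stg_step M (k+d) i (by omega),
      stg_stab M d k i h]

lemma vv_eq (M : Struc → ℕ → Option ℕ) (k i : ℕ) (h : i < k + 2) :
    (stg M k).1.getD i 0 = vv M i := by
  rcases le_or_gt i k with hik | hik
  · rw [vv, show k = i + (k - i) by omega, stg_stab M (k-i) i i (by omega)]
  · have hik' : i = k + 1 := by omega
    subst hik'
    rw [vv, stg_step M k (k+1) h]

lemma vv_succ2 (M : Struc → ℕ → Option ℕ) (k : ℕ) :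
    vv M (k+2) = (stg M k).2 + vv M (k+1) + 2 := by
  rw [← vv_eq M (k+1) (k+2) (by omega), stg_succ_fst,
    List.getD_append_right _ _ _ _ (by rw [stg_len]),
    stg_len, Nat.sub_self]
  show (stg M k).2 + (stg M k).1.getD (k+1) 0 + 2 = (stg M k).2 + vv M (k+1) + 2
  rw [vv_eq M k (k+1) (by omega)]

lemma vv_gap (M : Struc → ℕ → Option ℕ) (i : ℕ) : vv M i + 2 ≤ vv M (i+1) := by
  cases i with
  | zero => show vv M 0 + 2 ≤ vv M 1; rfl
  | succ k => rw [vv_succ2]; omega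

lemma vv_mono (M : Struc → ℕ → Option ℕ) : StrictMono (vv M) :=
  strictMono_nat_of_lt_succ (fun n => by have := vv_gap M n; omega)

lemma PL_stg (M : Struc → ℕ → Option ℕ) (k : ℕ) :
    PL (stg M k).1 = Pstr (vv M) (k+2) := by
  rw [PL, stg_len]
  exact Pstr_congr (fun i hi => vv_eq M k i hi)

lemma ex_pick {M : Struc → ℕ → Option ℕ} (hEx : ExLearns pathFamily M) (k b : ℕ) :
    ∃ s, b ≤ s ∧ M (PL (stg M k).1) s = some (k+1) := by
  have hiso : Isom (PL (stg M k).1) (pathFamily (k+1)) := by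
    rw [PL_stg]
    exact isom_Pstr (vv_mono M) (k+2)
  obtain ⟨s₀, hs⟩ := hEx _ (k+1) hiso
  exact ⟨max b s₀, le_max_left _ _, hs _ (le_max_right _ _)⟩

lemma stg_conj {M : Struc → ℕ → Option ℕ} (hEx : ExLearns pathFamily M) (k : ℕ) :
    M (PL (stg M k).1) ((stg M k).2) = some (k+1) := by
  cases k with
  | zero => exact (pick_spec M (ex_pick hEx 0 0)).2
  | succ k => exact (pick_spec M (ex_pick hEx (k+1) ((stg M k).2 + 1))).2

lemma stg_t_lt {M : Struc → ℕ → Option ℕ} (hEx : ExLearns pathFamily M) (k : ℕ) :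
    (stg M k).2 < (stg M (k+1)).2 :=
  (pick_spec M (ex_pick hEx (k+1) ((stg M k).2 + 1))).1

lemma stg_t_ge {M : Struc → ℕ → Option ℕ} (hEx : ExLearns pathFamily M) : ∀ k, k ≤ (stg M k).2
  | 0 => Nat.zero_le _
  | k+1 => by have := stg_t_lt hEx k; have := stg_t_ge hEx k; omega

lemma agree_ray {M : Struc → ℕ → Option ℕ} (k : ℕ) :
    restrEq (RayStr (vv M)) (PL (stg M k).1) ((stg M k).2) := by
  intro x hx y hy
  rw [PL_stg]
  have hwi : ∀ i, i ≤ vv M i := fun i => (vv_mono M).le_apply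
  have hbig : (stg M k).2 < vv M (k+2) := by rw [vv_succ2]; omega
  rw [Bool.eq_iff_iff, Ray_iff (vv M) hwi, Pstr_iff]
  constructor
  · rintro ⟨m, hd⟩
    refine ⟨m, ?_, hd⟩
    by_contra hcon
    have h1 : vv M (k+2) ≤ vv M (m+1) := (vv_mono M).monotone (by omega)
    rcases hd with ⟨-, h2⟩ | ⟨-, h2⟩ <;> omega
  · rintro ⟨m, -, hd⟩
    exact ⟨m, hd⟩

theorem no_ex_learner : ¬ ∃ M : Struc → ℕ → Option ℕ, IsLearner M ∧ ExLearns pathFamily M := by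
  rintro ⟨M, hL, hEx⟩
  have hrayIso : Isom (RayStr (vv M)) (pathFamily 0) :=
    isom_RayStr (vv_mono M) (vv_gap M)
  obtain ⟨s₀, hs⟩ := hEx _ 0 hrayIso
  have h1 : M (RayStr (vv M)) ((stg M s₀).2) = some 0 :=
    hs _ (le_trans (stg_t_ge hEx s₀) le_rfl)
  have h2 : M (RayStr (vv M)) ((stg M s₀).2) = M (PL (stg M s₀).1) ((stg M s₀).2) :=
    hL _ _ _ (agree_ray s₀)
  rw [h1, stg_conj hEx s₀] at h2
  simp at h2

/-- The family `{R_n ⊕ I : n ≥ 2} ∪ {R ⊕ I}` is `E_range`-learnable but not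
Ex-learnable. -/
theorem pathFamily_erange_not_ex :
    (∃ Γ : Struc → (ℕ → ℕ), ContinuousOn Γ (LD pathFamily) ∧
        ∀ R ∈ LD pathFamily, ∀ R' ∈ LD pathFamily,
          (Isom R R' ↔ Erange (Γ R) (Γ R'))) ∧
    ¬ ∃ M : Struc → ℕ → Option ℕ, IsLearner M ∧ ExLearns pathFamily M := by
  constructor
  · refine ⟨fun R => Gam R, Gam_continuous.continuousOn, ?_⟩
    rintro R ⟨i, hi⟩ R' ⟨j, hj⟩
    have hsymJ : ∀ x y, R' x y = R' y x := symm_of_isom hj (pathFamily_symm j)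
    constructor
    · intro hIso
      show Set.range (Gam R) = Set.range (Gam R')
      rw [range_Gam, range_Gam]
      exact Qs_eq_of_isom hIso hsymJ
    · intro hE
      have hQ : Qs R = Qs R' := by
        have hE' : Set.range (Gam R) = Set.range (Gam R') := hE
        rw [range_Gam, range_Gam] at hE'
        exact hE'
      have hQij : Qs (pathFamily i) = Qs (pathFamily j) := by
        rw [← Qs_eq_of_isom hi (pathFamily_symm i), ← Qs_eq_of_isom hj (pathFamily_symm j)]
        exact hQ
      have hij : i = j := Qs_pathFamily_inj hQij
      subst hij
      exact isom_trans hi (isom_symm hj)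
  · exact no_ex_learner
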